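/- In the Nash equilibria where h = 1 and aᵢ = 1 − (3/4)kᵢ², the Shapley reward of a large player, (aᵢ − 1 + kᵢ)/kᵢ, exceeds her proportional share aᵢ/(aᵢ + kᵢ) by exactly kᵢ(3kᵢ − 2)²/(4(2 − kᵢ)(3kᵢ + 2)), which is nonnegative for kᵢ ∈ (0,1]. -/

import Mathlib

/-- In the Nash equilibria with `h = 1` and `aᵢ = 1 - (3/4)kᵢ²`, the Shapley reward
`(aᵢ - 1 + kᵢ)/kᵢ` exceeds the proportional share `aᵢ/(aᵢ + kᵢ)` by exactly
`kᵢ(3kᵢ - 2)²/(4(2 - kᵢ)(3kᵢ + 2))`, which is nonnegative for `kᵢ ∈ (0,1]`. -/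
theorem shapley_exceeds_proportional
    (k a : ℝ) (hk : 0 < k) (hk1 : k ≤ 1) (ha : a = 1 - (3 / 4) * k ^ 2) :
    (a - 1 + k) / k - a / (a + k) = k * (3 * k - 2) ^ 2 / (4 * (2 - k) * (3 * k + 2)) ∧
    0 ≤ k * (3 * k - 2) ^ 2 / (4 * (2 - k) * (3 * k + 2)) := by
  subst ha
  constructor
  · have h1 : k ≠ 0 := ne_of_gt hk
    have h2 : (2 : ℝ) - k > 0 := by linarith
    have h3 : (3 : ℝ) * k + 2 > 0 := by linarith
    have h4 : 1 - 3 / 4 * k ^ 2 + k ≠ 0 := by nlinarith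
    have h5 : (4 : ℝ) + (k * 4 - k ^ 2 * 3) ≠ 0 := by nlinarith
    field_simp
    ring_nf
    have h6 : (4 : ℝ) * (1 + k) - k ^ 2 * 3 ≠ 0 := by nlinarith
    field_simp
    ring
  · apply div_nonneg
    · positivity
    · nlinarith
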